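/- Let n ≥ 2 be an integer, a > 0, R > 0, and let φ_c(x) = a·e^{−|x|} with weak derivative φ_c'(x) = −sign(x)·a·e^{−|x|}. Then there exists a constant A > 0, depending only on n, a and R, such that for every u ∈ H²(ℝ) with ‖u‖_{H²(ℝ)} ≤ R and every ε with 0 < ε < (3 − 2√2)·a: if ∫_ℝ ( (u − φ_c)² + (u' − φ_c')² ) dx ≤ ε², then |F(u) − F(φ_c)| ≤ A·ε. -/

import Mathlib

open MeasureTheory Finset ENNReal Filter


noncomputable def Ff (n : ℕ) (α β : ℝ) : ℝ :=
  α ^ (2 * n + 2) +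
    (∑ k ∈ Finset.Icc 1 n,
      (-1 : ℝ) ^ (k + 1) / (2 * (k : ℝ) - 1) * ((n + 1).choose k : ℝ) *
        α ^ (2 * n - 2 * k + 2) * β ^ (2 * k)) +
    (-1 : ℝ) ^ n * β ^ (2 * n + 2) / (2 * (n : ℝ) + 1)

lemma coeff_bound (n k : ℕ) (hk : 1 ≤ k) :
    |(-1 : ℝ) ^ (k + 1) / (2 * (k : ℝ) - 1) * ((n + 1).choose k : ℝ)| ≤ 2 ^ (n + 1) := by
  have hden : (1:ℝ) ≤ 2 * (k : ℝ) - 1 := by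
    have : (1:ℝ) ≤ (k:ℝ) := by exact_mod_cast hk
    linarith
  have hchoose : ((n + 1).choose k : ℝ) ≤ 2 ^ (n + 1) := by
    have h1 : (n + 1).choose k ≤ 2 ^ (n + 1) := by
      rcases le_or_gt k (n + 1) with h | h
      · calc (n + 1).choose k ≤ ∑ m ∈ range (n + 2), (n + 1).choose m :=
            Finset.single_le_sum (fun m _ => Nat.zero_le _) (Finset.mem_range.2 (by omega))
          _ = 2 ^ (n + 1) := Nat.sum_range_choose (n + 1)
      · rw [Nat.choose_eq_zero_of_lt h]; exact Nat.zero_le _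
    exact_mod_cast h1
  rw [abs_mul, abs_div, abs_pow, abs_neg, abs_one, one_pow, one_div]
  rw [Nat.abs_cast]
  have hinv : |2 * (k : ℝ) - 1|⁻¹ ≤ 1 := by
    rw [abs_of_pos (by linarith)]
    exact inv_le_one_of_one_le₀ hden
  calc |2 * (k : ℝ) - 1|⁻¹ * ((n + 1).choose k : ℝ)
      ≤ 1 * (2 ^ (n + 1)) := by
        refine mul_le_mul hinv hchoose (by positivity) (by norm_num)
    _ = 2 ^ (n + 1) := by ring

lemma pow_sub_pow_bound {x y M : ℝ} (hM : 0 ≤ M) (hx : |x| ≤ M) (hy : |y| ≤ M) {p : ℕ}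
    (hp : p ≠ 1) : |x ^ p - y ^ p| ≤ p * M ^ (p - 2) * ((|x| + |y|) * |x - y|) := by
  rcases Nat.eq_zero_or_pos p with h0 | hpos
  · simp [h0]
  have hp2 : 2 ≤ p := by omega
  have hmono : ∀ i ∈ range p, |x ^ i * y ^ (p - 1 - i)| ≤ M ^ (p - 2) * (|x| + |y|) := by
    intro i hi
    have hi' : i < p := Finset.mem_range.1 hi
    rw [abs_mul, abs_pow, abs_pow]
    rcases Nat.eq_zero_or_pos i with h0 | hip
    · subst h0
      obtain ⟨r, hr⟩ : ∃ r, p - 1 - 0 = r + 1 := ⟨p - 2, by omega⟩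
      have hr2 : r = p - 2 := by omega
      rw [hr, pow_succ, pow_zero, one_mul, hr2]
      have : |y| ^ (p - 2) ≤ M ^ (p - 2) := pow_le_pow_left₀ (abs_nonneg _) hy _
      nlinarith [abs_nonneg x, abs_nonneg y, pow_nonneg (abs_nonneg y) (p-2),
        pow_nonneg hM (p-2)]
    · obtain ⟨r, hr⟩ : ∃ r, i = r + 1 := ⟨i - 1, by omega⟩
      subst hr
      rw [pow_succ]
      have h1 : |x| ^ r * |y| ^ (p - 1 - (r + 1)) ≤ M ^ (p - 2) := by
        have e : r + (p - 1 - (r + 1)) = p - 2 := by omega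
        calc |x| ^ r * |y| ^ (p - 1 - (r + 1)) ≤ M ^ r * M ^ (p - 1 - (r + 1)) := by
              exact mul_le_mul (pow_le_pow_left₀ (abs_nonneg _) hx _)
                (pow_le_pow_left₀ (abs_nonneg _) hy _) (pow_nonneg (abs_nonneg _) _)
                (pow_nonneg hM _)
          _ = M ^ (p - 2) := by rw [← pow_add, e]
      calc |x| ^ r * |x| * |y| ^ (p - 1 - (r + 1))
          = (|x| ^ r * |y| ^ (p - 1 - (r + 1))) * |x| := by ring
        _ ≤ M ^ (p - 2) * |x| :=
            mul_le_mul_of_nonneg_right h1 (abs_nonneg _)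
        _ ≤ M ^ (p - 2) * (|x| + |y|) := by
            have := abs_nonneg y
            nlinarith [pow_nonneg hM (p - 2)]
  have hgeom := geom_sum₂_mul x y p
  have habs : |x ^ p - y ^ p| ≤ (p * (M ^ (p - 2) * (|x| + |y|))) * |x - y| := by
    rw [← hgeom, abs_mul]
    refine mul_le_mul_of_nonneg_right ?_ (abs_nonneg _)
    calc |∑ i ∈ range p, x ^ i * y ^ (p - 1 - i)| ≤ ∑ i ∈ range p, |x ^ i * y ^ (p - 1 - i)| :=
          Finset.abs_sum_le_sum_abs _ _
      _ ≤ ∑ _i ∈ range p, M ^ (p - 2) * (|x| + |y|) := Finset.sum_le_sum hmono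
      _ = p * (M ^ (p - 2) * (|x| + |y|)) := by
          rw [Finset.sum_const, Finset.card_range, nsmul_eq_mul]
  calc |x ^ p - y ^ p| ≤ (p * (M ^ (p - 2) * (|x| + |y|))) * |x - y| := habs
    _ = p * M ^ (p - 2) * ((|x| + |y|) * |x - y|) := by ring

lemma term_bound {α β γ δ M : ℝ} (hM : 0 ≤ M) (h1 : |α| ≤ M) (h2 : |β| ≤ M) (h3 : |γ| ≤ M)
    (h4 : |δ| ≤ M) {p q N : ℕ} (hp : p ≠ 1) (hq : q ≠ 1) (hpq : p + q = 2 * N + 2) :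
    |α ^ p * β ^ q - γ ^ p * δ ^ q| ≤ ((2 * N + 2) * M ^ (2 * N)) *
      ((|α| + |γ|) * |α - γ| + (|β| + |δ|) * |β - δ|) := by
  have hD1 : (0:ℝ) ≤ (|α| + |γ|) * |α - γ| := by positivity
  have hD2 : (0:ℝ) ≤ (|β| + |δ|) * |β - δ| := by positivity
  have key : |α ^ p * β ^ q - γ ^ p * δ ^ q| ≤
      |α ^ p - γ ^ p| * |β| ^ q + |γ| ^ p * |β ^ q - δ ^ q| := by
    have e : α ^ p * β ^ q - γ ^ p * δ ^ q = (α ^ p - γ ^ p) * β ^ q + γ ^ p * (β ^ q - δ ^ q) := by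
      ring
    rw [e]
    calc |(α ^ p - γ ^ p) * β ^ q + γ ^ p * (β ^ q - δ ^ q)|
        ≤ |(α ^ p - γ ^ p) * β ^ q| + |γ ^ p * (β ^ q - δ ^ q)| := abs_add_le _ _
      _ = |α ^ p - γ ^ p| * |β| ^ q + |γ| ^ p * |β ^ q - δ ^ q| := by
          rw [abs_mul, abs_mul, abs_pow, abs_pow]
  have hbq : |β| ^ q ≤ M ^ q := pow_le_pow_left₀ (abs_nonneg _) h2 _
  have hgp : |γ| ^ p ≤ M ^ p := pow_le_pow_left₀ (abs_nonneg _) h3 _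
  have hA := pow_sub_pow_bound hM h1 h3 hp
  have hB := pow_sub_pow_bound hM h2 h4 hq
  have hMpow : ∀ r s : ℕ, r + s = 2 * N → M ^ r * M ^ s = M ^ (2 * N) := by
    intro r s hrs; rw [← pow_add, hrs]
  rcases Nat.eq_zero_or_pos p with hp0 | hpp
  · subst hp0
    have hq2 : q = 2 * N + 2 := by omega
    have e1 : |α ^ 0 - γ ^ 0| = 0 := by simp
    have t2 : |γ| ^ 0 * |β ^ q - δ ^ q| ≤ ((2 * N + 2) * M ^ (2 * N)) * ((|β| + |δ|) * |β - δ|) := by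
      rw [pow_zero, one_mul]
      calc |β ^ q - δ ^ q| ≤ q * M ^ (q - 2) * ((|β| + |δ|) * |β - δ|) := hB
        _ = ((2 * N + 2) * M ^ (2 * N)) * ((|β| + |δ|) * |β - δ|) := by
            rw [hq2, Nat.add_sub_cancel]; push_cast; ring
    calc |α ^ 0 * β ^ q - γ ^ 0 * δ ^ q| ≤ |α ^ 0 - γ ^ 0| * |β| ^ q + |γ| ^ 0 * |β ^ q - δ ^ q| :=
          key
      _ = |γ| ^ 0 * |β ^ q - δ ^ q| := by rw [e1]; ring
      _ ≤ ((2 * N + 2) * M ^ (2 * N)) * ((|β| + |δ|) * |β - δ|) := t2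
      _ ≤ _ := by
          have hc : (0:ℝ) ≤ (2 * (N:ℝ) + 2) * M ^ (2 * N) := by positivity
          nlinarith [mul_nonneg hc hD1]
  rcases Nat.eq_zero_or_pos q with hq0 | hqp
  · subst hq0
    have hp2 : p = 2 * N + 2 := by omega
    have t1 : |α ^ p - γ ^ p| * |β| ^ 0 ≤ ((2 * N + 2) * M ^ (2 * N)) * ((|α| + |γ|) * |α - γ|) := by
      rw [pow_zero, mul_one]
      calc |α ^ p - γ ^ p| ≤ p * M ^ (p - 2) * ((|α| + |γ|) * |α - γ|) := hA
        _ = ((2 * N + 2) * M ^ (2 * N)) * ((|α| + |γ|) * |α - γ|) := by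
            rw [hp2, Nat.add_sub_cancel]; push_cast; ring
    have t2 : |γ| ^ p * |β ^ 0 - δ ^ 0| = 0 := by simp
    calc |α ^ p * β ^ 0 - γ ^ p * δ ^ 0| ≤ |α ^ p - γ ^ p| * |β| ^ 0 + |γ| ^ p * |β ^ 0 - δ ^ 0| :=
          key
      _ = |α ^ p - γ ^ p| * |β| ^ 0 := by rw [t2]; ring
      _ ≤ ((2 * N + 2) * M ^ (2 * N)) * ((|α| + |γ|) * |α - γ|) := t1
      _ ≤ _ := by
          have hc : (0:ℝ) ≤ (2 * (N:ℝ) + 2) * M ^ (2 * N) := by positivity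
          nlinarith [mul_nonneg hc hD2]
  · -- both positive, hence ≥ 2
    have hp2 : 2 ≤ p := by omega
    have hq2 : 2 ≤ q := by omega
    have e1 : M ^ (p - 2) * M ^ q = M ^ (2 * N) := hMpow _ _ (by omega)
    have e2 : M ^ p * M ^ (q - 2) = M ^ (2 * N) := hMpow _ _ (by omega)
    have t1 : |α ^ p - γ ^ p| * |β| ^ q ≤ (p * M ^ (2 * N)) * ((|α| + |γ|) * |α - γ|) := by
      calc |α ^ p - γ ^ p| * |β| ^ q ≤ (p * M ^ (p - 2) * ((|α| + |γ|) * |α - γ|)) * M ^ q := by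
            refine mul_le_mul hA hbq (pow_nonneg (abs_nonneg _) _) ?_
            positivity
        _ = (p * (M ^ (p - 2) * M ^ q)) * ((|α| + |γ|) * |α - γ|) := by ring
        _ = (p * M ^ (2 * N)) * ((|α| + |γ|) * |α - γ|) := by rw [e1]
    have t2 : |γ| ^ p * |β ^ q - δ ^ q| ≤ (q * M ^ (2 * N)) * ((|β| + |δ|) * |β - δ|) := by
      calc |γ| ^ p * |β ^ q - δ ^ q| ≤ M ^ p * (q * M ^ (q - 2) * ((|β| + |δ|) * |β - δ|)) := by
            refine mul_le_mul hgp hB (abs_nonneg _) (pow_nonneg hM _)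
        _ = (q * (M ^ p * M ^ (q - 2))) * ((|β| + |δ|) * |β - δ|) := by ring
        _ = (q * M ^ (2 * N)) * ((|β| + |δ|) * |β - δ|) := by rw [e2]
    have hple : (p : ℝ) ≤ 2 * N + 2 := by
      have : p ≤ 2 * N + 2 := by omega
      exact_mod_cast this
    have hqle : (q : ℝ) ≤ 2 * N + 2 := by
      have : q ≤ 2 * N + 2 := by omega
      exact_mod_cast this
    have hMN : (0:ℝ) ≤ M ^ (2 * N) := pow_nonneg hM _
    calc |α ^ p * β ^ q - γ ^ p * δ ^ q| ≤ |α ^ p - γ ^ p| * |β| ^ q + |γ| ^ p * |β ^ q - δ ^ q| :=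
          key
      _ ≤ (p * M ^ (2 * N)) * ((|α| + |γ|) * |α - γ|) +
            (q * M ^ (2 * N)) * ((|β| + |δ|) * |β - δ|) := add_le_add t1 t2
      _ ≤ _ := by
          nlinarith [mul_le_mul_of_nonneg_right (mul_le_mul_of_nonneg_right hple hMN) hD1,
            mul_le_mul_of_nonneg_right (mul_le_mul_of_nonneg_right hqle hMN) hD2,
            mul_nonneg hMN hD1, mul_nonneg hMN hD2]

lemma monomial_bound {x y M : ℝ} (hM : 0 ≤ M) (hx : |x| ≤ M) (hy : |y| ≤ M) {p q N : ℕ}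
    (hpq : p + q = 2 * N + 2) (h2 : 2 ≤ p ∨ 2 ≤ q) :
    |x ^ p * y ^ q| ≤ M ^ (2 * N) * (x ^ 2 + y ^ 2) := by
  rw [abs_mul, abs_pow, abs_pow]
  rcases h2 with hp | hq
  · obtain ⟨r, hr⟩ : ∃ r, p = 2 + r := ⟨p - 2, by omega⟩
    subst hr
    have e : r + q = 2 * N := by omega
    have h1 : |x| ^ r * |y| ^ q ≤ M ^ (2 * N) := by
      calc |x| ^ r * |y| ^ q ≤ M ^ r * M ^ q :=
            mul_le_mul (pow_le_pow_left₀ (abs_nonneg _) hx _)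
              (pow_le_pow_left₀ (abs_nonneg _) hy _) (pow_nonneg (abs_nonneg _) _)
              (pow_nonneg hM _)
        _ = M ^ (2 * N) := by rw [← pow_add, e]
    calc |x| ^ (2 + r) * |y| ^ q = x ^ 2 * (|x| ^ r * |y| ^ q) := by
          rw [pow_add, sq_abs]; ring
      _ ≤ x ^ 2 * M ^ (2 * N) := mul_le_mul_of_nonneg_left h1 (sq_nonneg _)
      _ ≤ M ^ (2 * N) * (x ^ 2 + y ^ 2) := by nlinarith [pow_nonneg hM (2 * N), sq_nonneg y]
  · obtain ⟨r, hr⟩ : ∃ r, q = 2 + r := ⟨q - 2, by omega⟩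
    subst hr
    have e : p + r = 2 * N := by omega
    have h1 : |x| ^ p * |y| ^ r ≤ M ^ (2 * N) := by
      calc |x| ^ p * |y| ^ r ≤ M ^ p * M ^ r :=
            mul_le_mul (pow_le_pow_left₀ (abs_nonneg _) hx _)
              (pow_le_pow_left₀ (abs_nonneg _) hy _) (pow_nonneg (abs_nonneg _) _)
              (pow_nonneg hM _)
        _ = M ^ (2 * N) := by rw [← pow_add, e]
    calc |x| ^ p * |y| ^ (2 + r) = y ^ 2 * (|x| ^ p * |y| ^ r) := by
          rw [pow_add, sq_abs]; ring
      _ ≤ y ^ 2 * M ^ (2 * N) := mul_le_mul_of_nonneg_left h1 (sq_nonneg _)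
      _ ≤ M ^ (2 * N) * (x ^ 2 + y ^ 2) := by nlinarith [pow_nonneg hM (2 * N), sq_nonneg x]

lemma Ff_abs_bound (n : ℕ) (hn : 1 ≤ n) {α β M : ℝ} (hM : 0 ≤ M) (h1 : |α| ≤ M) (h2 : |β| ≤ M) :
    |Ff n α β| ≤ ((n : ℝ) + 2) * 2 ^ (n + 1) * M ^ (2 * n) * (α ^ 2 + β ^ 2) := by
  have hsq : (0:ℝ) ≤ α ^ 2 + β ^ 2 := by positivity
  have hMN : (0:ℝ) ≤ M ^ (2 * n) := pow_nonneg hM _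
  have hbase : (0:ℝ) ≤ M ^ (2 * n) * (α ^ 2 + β ^ 2) := mul_nonneg hMN hsq
  have hA : |α ^ (2 * n + 2)| ≤ M ^ (2 * n) * (α ^ 2 + β ^ 2) := by
    have := monomial_bound hM h1 h2 (p := 2 * n + 2) (q := 0) (N := n) (by omega) (Or.inl (by omega))
    simpa using this
  have hB : |(-1 : ℝ) ^ n * β ^ (2 * n + 2) / (2 * (n : ℝ) + 1)| ≤
      M ^ (2 * n) * (α ^ 2 + β ^ 2) := by
    have hmon := monomial_bound hM h1 h2 (p := 0) (q := 2 * n + 2) (N := n) (by omega)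
      (Or.inr (by omega))
    rw [abs_div, abs_mul, abs_pow, abs_neg, abs_one, one_pow, one_mul]
    have hden : (1:ℝ) ≤ |2 * (n : ℝ) + 1| := by
      rw [abs_of_pos (by positivity)]
      have : (0:ℝ) ≤ (n:ℝ) := Nat.cast_nonneg n
      linarith
    calc |β ^ (2 * n + 2)| / |2 * (n : ℝ) + 1| ≤ |β ^ (2 * n + 2)| :=
          div_le_self (abs_nonneg _) hden
      _ ≤ M ^ (2 * n) * (α ^ 2 + β ^ 2) := by simpa using hmon
  have hS : |∑ k ∈ Finset.Icc 1 n,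
      (-1 : ℝ) ^ (k + 1) / (2 * (k : ℝ) - 1) * ((n + 1).choose k : ℝ) *
        α ^ (2 * n - 2 * k + 2) * β ^ (2 * k)| ≤
      (n : ℝ) * (2 ^ (n + 1) * (M ^ (2 * n) * (α ^ 2 + β ^ 2))) := by
    calc _ ≤ ∑ k ∈ Finset.Icc 1 n,
          |(-1 : ℝ) ^ (k + 1) / (2 * (k : ℝ) - 1) * ((n + 1).choose k : ℝ) *
            α ^ (2 * n - 2 * k + 2) * β ^ (2 * k)| := Finset.abs_sum_le_sum_abs _ _
      _ ≤ ∑ k ∈ Finset.Icc 1 n, 2 ^ (n + 1) * (M ^ (2 * n) * (α ^ 2 + β ^ 2)) := by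
          refine Finset.sum_le_sum fun k hk => ?_
          obtain ⟨hk1, hk2⟩ := Finset.mem_Icc.1 hk
          have hmon := monomial_bound hM h1 h2 (p := 2 * n - 2 * k + 2) (q := 2 * k) (N := n)
            (by omega) (Or.inl (by omega))
          have hco := coeff_bound n k hk1
          calc |(-1 : ℝ) ^ (k + 1) / (2 * (k : ℝ) - 1) * ((n + 1).choose k : ℝ) *
                α ^ (2 * n - 2 * k + 2) * β ^ (2 * k)|
              = |(-1 : ℝ) ^ (k + 1) / (2 * (k : ℝ) - 1) * ((n + 1).choose k : ℝ)| *
                |α ^ (2 * n - 2 * k + 2) * β ^ (2 * k)| := by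
                rw [abs_mul, abs_mul, mul_assoc]
                rw [← abs_mul]
            _ ≤ 2 ^ (n + 1) * (M ^ (2 * n) * (α ^ 2 + β ^ 2)) :=
                mul_le_mul hco hmon (abs_nonneg _) (by positivity)
      _ = (n : ℝ) * (2 ^ (n + 1) * (M ^ (2 * n) * (α ^ 2 + β ^ 2))) := by
          rw [Finset.sum_const, Nat.card_Icc, nsmul_eq_mul]
          norm_num
  have htwo : (1:ℝ) ≤ 2 ^ (n + 1) := one_le_pow₀ (by norm_num)
  calc |Ff n α β| ≤ |α ^ (2 * n + 2)| + |∑ k ∈ Finset.Icc 1 n,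
        (-1 : ℝ) ^ (k + 1) / (2 * (k : ℝ) - 1) * ((n + 1).choose k : ℝ) *
          α ^ (2 * n - 2 * k + 2) * β ^ (2 * k)| +
        |(-1 : ℝ) ^ n * β ^ (2 * n + 2) / (2 * (n : ℝ) + 1)| := by
        unfold Ff
        exact (abs_add_le _ _).trans (add_le_add_left (abs_add_le _ _) _)
  _ ≤ M ^ (2 * n) * (α ^ 2 + β ^ 2) + (n : ℝ) * (2 ^ (n + 1) * (M ^ (2 * n) * (α ^ 2 + β ^ 2))) +
        M ^ (2 * n) * (α ^ 2 + β ^ 2) := by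
        exact add_le_add (add_le_add hA hS) hB
  _ ≤ ((n : ℝ) + 2) * 2 ^ (n + 1) * M ^ (2 * n) * (α ^ 2 + β ^ 2) := by
        have hn0 : (0:ℝ) ≤ (n:ℝ) := Nat.cast_nonneg n
        nlinarith [mul_nonneg (mul_nonneg hn0 hbase) (sub_nonneg.2 htwo), hbase,
          mul_nonneg hbase (sub_nonneg.2 htwo)]

lemma Ff_diff_bound (n : ℕ) {α β γ δ M : ℝ} (hM : 0 ≤ M) (h1 : |α| ≤ M) (h2 : |β| ≤ M)
    (h3 : |γ| ≤ M) (h4 : |δ| ≤ M) :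
    |Ff n α β - Ff n γ δ| ≤ ((n : ℝ) + 2) * 2 ^ (n + 1) * ((2 * (n : ℝ) + 2) * M ^ (2 * n)) *
      ((|α| + |γ|) * |α - γ| + (|β| + |δ|) * |β - δ|) := by
  set D : ℝ := (|α| + |γ|) * |α - γ| + (|β| + |δ|) * |β - δ| with hDdef
  have hD : 0 ≤ D := by positivity
  set C0 : ℝ := (2 * (n : ℝ) + 2) * M ^ (2 * n) with hC0def
  have hC0 : 0 ≤ C0 := by positivity
  have ht1 : |α ^ (2 * n + 2) - γ ^ (2 * n + 2)| ≤ C0 * D := by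
    have := term_bound hM h1 h2 h3 h4 (p := 2 * n + 2) (q := 0) (N := n)
      (by omega) (by omega) (by omega)
    simpa using this
  have ht3 : |(-1 : ℝ) ^ n * β ^ (2 * n + 2) / (2 * (n : ℝ) + 1) -
      (-1 : ℝ) ^ n * δ ^ (2 * n + 2) / (2 * (n : ℝ) + 1)| ≤ C0 * D := by
    have hterm := term_bound hM h1 h2 h3 h4 (p := 0) (q := 2 * n + 2) (N := n)
      (by omega) (by omega) (by omega)
    have e : (-1 : ℝ) ^ n * β ^ (2 * n + 2) / (2 * (n : ℝ) + 1) -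
        (-1 : ℝ) ^ n * δ ^ (2 * n + 2) / (2 * (n : ℝ) + 1) =
        ((-1 : ℝ) ^ n / (2 * (n : ℝ) + 1)) * (β ^ (2 * n + 2) - δ ^ (2 * n + 2)) := by ring
    have hco : |(-1 : ℝ) ^ n / (2 * (n : ℝ) + 1)| ≤ 1 := by
      rw [abs_div, abs_pow, abs_neg, abs_one, one_pow, abs_of_pos (by positivity)]
      rw [div_le_one (by positivity)]
      have : (0:ℝ) ≤ (n:ℝ) := Nat.cast_nonneg n
      linarith
    rw [e, abs_mul]
    calc |(-1 : ℝ) ^ n / (2 * (n : ℝ) + 1)| * |β ^ (2 * n + 2) - δ ^ (2 * n + 2)|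
        ≤ 1 * (C0 * D) := by
          refine mul_le_mul hco ?_ (abs_nonneg _) (by norm_num)
          simpa using hterm
      _ = C0 * D := by ring
  have ht2 : |(∑ k ∈ Finset.Icc 1 n,
      (-1 : ℝ) ^ (k + 1) / (2 * (k : ℝ) - 1) * ((n + 1).choose k : ℝ) *
        α ^ (2 * n - 2 * k + 2) * β ^ (2 * k)) -
      (∑ k ∈ Finset.Icc 1 n,
      (-1 : ℝ) ^ (k + 1) / (2 * (k : ℝ) - 1) * ((n + 1).choose k : ℝ) *
        γ ^ (2 * n - 2 * k + 2) * δ ^ (2 * k))| ≤ (n : ℝ) * (2 ^ (n + 1) * (C0 * D)) := by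
    rw [← Finset.sum_sub_distrib]
    calc _ ≤ ∑ k ∈ Finset.Icc 1 n,
        |(-1 : ℝ) ^ (k + 1) / (2 * (k : ℝ) - 1) * ((n + 1).choose k : ℝ) *
          α ^ (2 * n - 2 * k + 2) * β ^ (2 * k) -
          (-1 : ℝ) ^ (k + 1) / (2 * (k : ℝ) - 1) * ((n + 1).choose k : ℝ) *
          γ ^ (2 * n - 2 * k + 2) * δ ^ (2 * k)| := Finset.abs_sum_le_sum_abs _ _
      _ ≤ ∑ _k ∈ Finset.Icc 1 n, 2 ^ (n + 1) * (C0 * D) := by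
          refine Finset.sum_le_sum fun k hk => ?_
          obtain ⟨hk1, hk2⟩ := Finset.mem_Icc.1 hk
          have hterm := term_bound hM h1 h2 h3 h4 (p := 2 * n - 2 * k + 2) (q := 2 * k) (N := n)
            (by omega) (by omega) (by omega)
          have hco := coeff_bound n k hk1
          have e : (-1 : ℝ) ^ (k + 1) / (2 * (k : ℝ) - 1) * ((n + 1).choose k : ℝ) *
              α ^ (2 * n - 2 * k + 2) * β ^ (2 * k) -
              (-1 : ℝ) ^ (k + 1) / (2 * (k : ℝ) - 1) * ((n + 1).choose k : ℝ) *
              γ ^ (2 * n - 2 * k + 2) * δ ^ (2 * k) =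
              ((-1 : ℝ) ^ (k + 1) / (2 * (k : ℝ) - 1) * ((n + 1).choose k : ℝ)) *
              (α ^ (2 * n - 2 * k + 2) * β ^ (2 * k) -
                γ ^ (2 * n - 2 * k + 2) * δ ^ (2 * k)) := by ring
          rw [e, abs_mul]
          exact mul_le_mul hco hterm (abs_nonneg _) (by positivity)
      _ = (n : ℝ) * (2 ^ (n + 1) * (C0 * D)) := by
          rw [Finset.sum_const, Nat.card_Icc, nsmul_eq_mul]
          norm_num
  have htwo : (1:ℝ) ≤ 2 ^ (n + 1) := one_le_pow₀ (by norm_num)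
  have hsplit : |Ff n α β - Ff n γ δ| ≤ C0 * D + (n : ℝ) * (2 ^ (n + 1) * (C0 * D)) + C0 * D := by
    have e : Ff n α β - Ff n γ δ =
        (α ^ (2 * n + 2) - γ ^ (2 * n + 2)) +
        ((∑ k ∈ Finset.Icc 1 n,
          (-1 : ℝ) ^ (k + 1) / (2 * (k : ℝ) - 1) * ((n + 1).choose k : ℝ) *
            α ^ (2 * n - 2 * k + 2) * β ^ (2 * k)) -
        (∑ k ∈ Finset.Icc 1 n,
          (-1 : ℝ) ^ (k + 1) / (2 * (k : ℝ) - 1) * ((n + 1).choose k : ℝ) *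
            γ ^ (2 * n - 2 * k + 2) * δ ^ (2 * k))) +
        ((-1 : ℝ) ^ n * β ^ (2 * n + 2) / (2 * (n : ℝ) + 1) -
          (-1 : ℝ) ^ n * δ ^ (2 * n + 2) / (2 * (n : ℝ) + 1)) := by
      unfold Ff; ring
    rw [e]
    exact ((abs_add_le _ _).trans (add_le_add_left (abs_add_le _ _) _)).trans
      (add_le_add (add_le_add ht1 ht2) ht3)
  refine hsplit.trans ?_
  have hb : 0 ≤ C0 * D := mul_nonneg hC0 hD
  have hn0 : (0:ℝ) ≤ (n:ℝ) := Nat.cast_nonneg n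
  nlinarith [mul_nonneg hb (sub_nonneg.2 htwo)]

lemma phi_sq_integrable (a : ℝ) :
    Integrable (fun x : ℝ => (a * Real.exp (-|x|)) ^ 2) (volume : Measure ℝ) := by
  have h1 : IntegrableOn (fun x : ℝ => (a * Real.exp (-|x|)) ^ 2) (Set.Ioi 0) := by
    have hbase : IntegrableOn (fun x : ℝ => Real.exp (-2 * x)) (Set.Ioi (0:ℝ)) :=
      exp_neg_integrableOn_Ioi 0 (by norm_num)
    have h2 : IntegrableOn (fun x : ℝ => a ^ 2 * Real.exp (-2 * x)) (Set.Ioi (0:ℝ)) :=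
      hbase.const_mul (a ^ 2)
    refine h2.congr_fun ?_ measurableSet_Ioi
    intro x hx
    simp only []
    rw [show |x| = x from abs_of_pos hx, show (-2:ℝ) * x = -x + -x by ring, Real.exp_add]
    ring
  have hIic : IntegrableOn (fun x : ℝ => (a * Real.exp (-|x|)) ^ 2) (Set.Iic 0) := by
    rw [← Measure.map_neg_eq_self (volume : Measure ℝ)]
    have m : MeasurableEmbedding fun x : ℝ => -x :=
      (Homeomorph.neg ℝ).measurableEmbedding
    rw [m.integrableOn_map_iff]
    simp_rw [Function.comp_def, abs_neg, Set.neg_preimage, Set.neg_Iic, neg_zero]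
    exact (integrableOn_Ici_iff_integrableOn_Ioi enorm_ne_top).mpr h1
  have hu := hIic.union h1
  rw [Set.Iic_union_Ioi] at hu
  exact integrableOn_univ.mp hu


lemma lim_zero_of_integrable {g : ℝ → ℝ} (hg : Integrable g) (hpos : ∀ x, 0 ≤ g x)
    {L : ℝ} (h : Tendsto g atTop (nhds L)) : L = 0 := by
  by_contra hL
  have hL0 : 0 ≤ L := ge_of_tendsto h (Eventually.of_forall hpos)
  have hLpos : 0 < L := lt_of_le_of_ne hL0 (Ne.symm hL)
  have hev : ∀ᶠ x in atTop, L / 2 ≤ g x := h.eventually_const_le (half_lt_self hLpos)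
  obtain ⟨N, hN⟩ := eventually_atTop.1 hev
  have hc : Integrable (fun _ : ℝ => L / 2) (volume.restrict (Set.Ioi N)) := by
    refine Integrable.mono' hg.restrict aestronglyMeasurable_const ?_
    filter_upwards [ae_restrict_mem measurableSet_Ioi] with x hx
    rw [Real.norm_eq_abs, abs_of_nonneg (by linarith)]
    exact hN x (le_of_lt hx)
  rw [integrable_const_iff] at hc
  rcases hc with h1 | h2
  · exact hL (by linarith)
  · have := h2.measure_univ_lt_top; simp [Real.volume_Ioi] at this

lemma sq_le_integral {v w : ℝ → ℝ} (hd : ∀ x, HasDerivAt v (w x) x)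
    (hv : MemLp v 2 (volume : Measure ℝ)) (hw : MemLp w 2 (volume : Measure ℝ)) (x : ℝ) :
    v x ^ 2 ≤ ∫ y : ℝ, (v y ^ 2 + w y ^ 2) := by
  have hsum : Integrable (fun y => v y ^ 2 + w y ^ 2) := hv.integrable_sq.add hw.integrable_sq
  have hprod : Integrable (fun y => 2 * (v y * w y)) := by
    refine Integrable.mono' hsum ((hv.aestronglyMeasurable.mul hw.aestronglyMeasurable).const_mul 2) ?_
    refine Eventually.of_forall fun y => ?_
    rw [Real.norm_eq_abs]
    refine abs_le.2 ⟨by nlinarith [sq_nonneg (v y + w y)], by nlinarith [sq_nonneg (v y - w y)]⟩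
  have gd : ∀ y, HasDerivAt (fun t => v t ^ 2) (2 * (v y * w y)) y := by
    intro y
    have := (hd y).pow 2
    refine this.congr_deriv ?_
    norm_num
    ring
  have h1 : ∀ t : ℝ, ∫ s in (0:ℝ)..t, 2 * (v s * w s) = v t ^ 2 - v 0 ^ 2 := fun t =>
    intervalIntegral.integral_eq_sub_of_hasDerivAt (fun s _ => gd s) hprod.intervalIntegrable
  have htend0 : Tendsto (fun t => ∫ s in (0:ℝ)..t, 2 * (v s * w s)) atTop
      (nhds (∫ s in Set.Ioi (0:ℝ), 2 * (v s * w s))) :=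
    intervalIntegral_tendsto_integral_Ioi 0 hprod.integrableOn tendsto_id
  have htends : Tendsto (fun t => v t ^ 2) atTop
      (nhds ((∫ s in Set.Ioi (0:ℝ), 2 * (v s * w s)) + v 0 ^ 2)) := by
    have h2 := htend0.add_const (v 0 ^ 2)
    simp_rw [h1] at h2
    simpa using h2
  have hL0 : (∫ s in Set.Ioi (0:ℝ), 2 * (v s * w s)) + v 0 ^ 2 = 0 :=
    lim_zero_of_integrable hv.integrable_sq (fun y => sq_nonneg _) htends
  rw [hL0] at htends
  have hFTC : ∫ y in Set.Ioi x, 2 * (v y * w y) = 0 - v x ^ 2 := by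
    refine integral_Ioi_of_hasDerivAt_of_tendsto ?_ (fun y _ => gd y) hprod.integrableOn htends
    exact ((gd x).continuousAt).continuousWithinAt
  have hxle : v x ^ 2 ≤ ∫ y in Set.Ioi x, (v y ^ 2 + w y ^ 2) := by
    have hneg : v x ^ 2 = -∫ y in Set.Ioi x, 2 * (v y * w y) := by linarith [hFTC]
    rw [hneg, ← integral_neg]
    exact integral_mono hprod.integrableOn.neg hsum.integrableOn
      (fun y => by nlinarith [sq_nonneg (v y + w y)])
  exact hxle.trans (setIntegral_le_integral hsum (Eventually.of_forall fun y => by positivity))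

set_option maxHeartbeats 2000000 in
/-- Lemma 3.3, `F`-part. Let `n ≥ 2`, `a > 0`, `R > 0`, and let
`φ_c(x) = a·e^{−|x|}` with weak derivative `φ_c'(x) = −sign(x)·a·e^{−|x|}`. There is a
constant `A > 0`, depending only on `n`, `a` and `R`, such that for every `u ∈ H²(ℝ)` (with
first and second derivatives `u'`, `u''`) with `‖u‖_{H²} ≤ R` (i.e.
`∫ (u² + u'² + u''²) ≤ R²`) and every `ε` with `0 < ε < (3 − 2√2)·a`: if
`∫_ℝ ((u − φ_c)² + (u' − φ_c')²) dx ≤ ε²`, then `|F(u) − F(φ_c)| ≤ A·ε`. -/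
theorem stmt17 (n : ℕ) (hn : 2 ≤ n) (a R : ℝ) (ha : 0 < a) (hR : 0 < R) :
    ∃ A > (0 : ℝ), ∀ (u u' u'' : ℝ → ℝ) (ε : ℝ),
      (∀ x, HasDerivAt u (u' x) x) →
      (∀ x, HasDerivAt u' (u'' x) x) →
      MemLp u 2 (volume : Measure ℝ) →
      MemLp u' 2 (volume : Measure ℝ) →
      MemLp u'' 2 (volume : Measure ℝ) →
      (∫ x : ℝ, ((u x) ^ 2 + (u' x) ^ 2 + (u'' x) ^ 2)) ≤ R ^ 2 →
      0 < ε → ε < (3 - 2 * Real.sqrt 2) * a →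
      (∫ x : ℝ,
        ((u x - a * Real.exp (-|x|)) ^ 2 +
          (u' x - (-Real.sign x * (a * Real.exp (-|x|)))) ^ 2)) ≤ ε ^ 2 →
      |(∫ x : ℝ,
          ((u x) ^ (2 * n + 2) +
            (∑ k ∈ Finset.Icc 1 n,
              (-1 : ℝ) ^ (k + 1) / (2 * (k : ℝ) - 1) * ((n + 1).choose k : ℝ) *
                (u x) ^ (2 * n - 2 * k + 2) * (u' x) ^ (2 * k)) +
            (-1 : ℝ) ^ n * (u' x) ^ (2 * n + 2) / (2 * (n : ℝ) + 1))) -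
        (∫ x : ℝ,
          ((a * Real.exp (-|x|)) ^ (2 * n + 2) +
            (∑ k ∈ Finset.Icc 1 n,
              (-1 : ℝ) ^ (k + 1) / (2 * (k : ℝ) - 1) * ((n + 1).choose k : ℝ) *
                (a * Real.exp (-|x|)) ^ (2 * n - 2 * k + 2) *
                (-Real.sign x * (a * Real.exp (-|x|))) ^ (2 * k)) +
            (-1 : ℝ) ^ n * (-Real.sign x * (a * Real.exp (-|x|))) ^ (2 * n + 2) /
              (2 * (n : ℝ) + 1)))| ≤ A * ε := by
  -- constants
  set M : ℝ := max R a with hMdef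
  have hM0 : 0 < M := lt_of_lt_of_le hR (le_max_left R a)
  have hM : 0 ≤ M := hM0.le
  set K1 : ℝ := ((n : ℝ) + 2) * 2 ^ (n + 1) * ((2 * (n : ℝ) + 2) * M ^ (2 * n)) with hK1def
  have hK1 : 0 < K1 := by positivity
  have hφ2int : Integrable (fun x : ℝ => (a * Real.exp (-|x|)) ^ 2) (volume : Measure ℝ) :=
    phi_sq_integrable a
  set Cφ : ℝ := ∫ x : ℝ, (a * Real.exp (-|x|)) ^ 2 with hCφdef
  have hCφ0 : 0 ≤ Cφ := integral_nonneg fun x => sq_nonneg _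
  refine ⟨K1 * (1 / 2 + R ^ 2 + 2 * Cφ) + 1, by positivity, ?_⟩
  intro u u' u'' ε hdu hdu' hu2 hu'2 hu''2 hH2 hε hεa hclose
  -- basic facts about φ
  have hφcont : Continuous (fun x : ℝ => a * Real.exp (-|x|)) :=
    continuous_const.mul (Real.continuous_exp.comp continuous_abs.neg)
  have hsign : Measurable Real.sign := by
    have e : Real.sign = fun r : ℝ => if r < 0 then (-1:ℝ) else if 0 < r then 1 else 0 :=
      funext fun r => rfl
    rw [e]
    exact Measurable.ite (measurableSet_lt measurable_id measurable_const) measurable_const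
      (Measurable.ite (measurableSet_lt measurable_const measurable_id) measurable_const
        measurable_const)
  have hφdmeas : Measurable (fun x : ℝ => -Real.sign x * (a * Real.exp (-|x|))) :=
    hsign.neg.mul hφcont.measurable
  have hexp_le : ∀ x : ℝ, Real.exp (-|x|) ≤ 1 := by
    intro x
    have := Real.exp_le_exp.2 (neg_nonpos.2 (abs_nonneg x))
    simpa using this
  have hφb' : ∀ x : ℝ, |a * Real.exp (-|x|)| ≤ a := by
    intro x
    rw [abs_of_pos (by positivity)]
    nlinarith [Real.exp_pos (-|x|), hexp_le x]
  have hφb : ∀ x : ℝ, |a * Real.exp (-|x|)| ≤ M := fun x => (hφb' x).trans (le_max_right R a)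
  have hsign_le : ∀ x : ℝ, |Real.sign x| ≤ 1 := by
    intro x
    rcases Real.sign_apply_eq x with h | h | h <;> rw [h] <;> norm_num
  have hφdb' : ∀ x : ℝ, |(-Real.sign x * (a * Real.exp (-|x|)))| ≤ |a * Real.exp (-|x|)| := by
    intro x
    rw [abs_mul, abs_neg]
    nlinarith [hsign_le x, abs_nonneg (a * Real.exp (-|x|)), abs_nonneg (Real.sign x)]
  have hφdb : ∀ x : ℝ, |(-Real.sign x * (a * Real.exp (-|x|)))| ≤ M := fun x =>
    (hφdb' x).trans (hφb x)
  have hφd_le : ∀ x : ℝ, (-Real.sign x * (a * Real.exp (-|x|))) ^ 2 ≤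
      (a * Real.exp (-|x|)) ^ 2 := by
    intro x
    nlinarith [hφdb' x, sq_abs (-Real.sign x * (a * Real.exp (-|x|))),
      sq_abs (a * Real.exp (-|x|)), abs_nonneg (-Real.sign x * (a * Real.exp (-|x|))),
      abs_nonneg (a * Real.exp (-|x|))]
  have hφd2int : Integrable (fun x : ℝ => (-Real.sign x * (a * Real.exp (-|x|))) ^ 2)
      (volume : Measure ℝ) := by
    refine Integrable.mono' hφ2int (hφdmeas.pow_const 2).aestronglyMeasurable ?_
    refine Eventually.of_forall fun x => ?_
    rw [Real.norm_eq_abs, abs_of_nonneg (sq_nonneg _)]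
    exact hφd_le x
  have hφmem : MemLp (fun x : ℝ => a * Real.exp (-|x|)) 2 (volume : Measure ℝ) :=
    (memLp_two_iff_integrable_sq hφcont.aestronglyMeasurable).2 hφ2int
  have hφdmem : MemLp (fun x : ℝ => -Real.sign x * (a * Real.exp (-|x|))) 2
      (volume : Measure ℝ) :=
    (memLp_two_iff_integrable_sq hφdmeas.aestronglyMeasurable).2 hφd2int
  -- basic facts about u
  have hcu : Continuous u :=
    Differentiable.continuous (fun x => (hdu x).differentiableAt)
  have hcu' : Continuous u' :=
    Differentiable.continuous (fun x => (hdu' x).differentiableAt)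
  have hIu : Integrable (fun x => u x ^ 2) (volume : Measure ℝ) := hu2.integrable_sq
  have hIu' : Integrable (fun x => u' x ^ 2) (volume : Measure ℝ) := hu'2.integrable_sq
  have hIu'' : Integrable (fun x => u'' x ^ 2) (volume : Measure ℝ) := hu''2.integrable_sq
  have hsplit : (∫ x : ℝ, ((u x) ^ 2 + (u' x) ^ 2 + (u'' x) ^ 2)) =
      (∫ x : ℝ, u x ^ 2) + (∫ x : ℝ, u' x ^ 2) + ∫ x : ℝ, u'' x ^ 2 := by
    rw [integral_add (f := fun x => u x ^ 2 + u' x ^ 2) (g := fun x => u'' x ^ 2)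
      (hIu.add hIu') hIu'',
      integral_add (f := fun x => u x ^ 2) (g := fun x => u' x ^ 2) hIu hIu']
  have h0u : 0 ≤ ∫ x : ℝ, u x ^ 2 := integral_nonneg fun x => sq_nonneg _
  have h0u' : 0 ≤ ∫ x : ℝ, u' x ^ 2 := integral_nonneg fun x => sq_nonneg _
  have h0u'' : 0 ≤ ∫ x : ℝ, u'' x ^ 2 := integral_nonneg fun x => sq_nonneg _
  have habs : ∀ t : ℝ, t ^ 2 ≤ M ^ 2 → |t| ≤ M := by
    intro t ht
    nlinarith [abs_nonneg t, sq_abs t]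
  have hRM : R ^ 2 ≤ M ^ 2 := by nlinarith [le_max_left R a]
  have hsupu : ∀ x, |u x| ≤ M := by
    intro x
    refine habs _ ?_
    have h := sq_le_integral hdu hu2 hu'2 x
    rw [integral_add (f := fun y => u y ^ 2) (g := fun y => u' y ^ 2) hIu hIu'] at h
    nlinarith
  have hsupu' : ∀ x, |u' x| ≤ M := by
    intro x
    refine habs _ ?_
    have h := sq_le_integral hdu' hu'2 hu''2 x
    rw [integral_add (f := fun y => u' y ^ 2) (g := fun y => u'' y ^ 2) hIu' hIu''] at h
    nlinarith
  -- integrability of the two integrands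
  have hn1 : 1 ≤ n := by omega
  have hfu_cont : Continuous (fun x => Ff n (u x) (u' x)) := by
    unfold Ff
    refine Continuous.add (Continuous.add (hcu.pow _) ?_) ?_
    · exact continuous_finset_sum _ fun k _ =>
        ((continuous_const.mul (hcu.pow _)).mul (hcu'.pow _))
    · exact (continuous_const.mul (hcu'.pow _)).div_const _
  have hfu_int : Integrable (fun x => Ff n (u x) (u' x)) (volume : Measure ℝ) := by
    refine Integrable.mono' ((hIu.add hIu').const_mul
      (((n : ℝ) + 2) * 2 ^ (n + 1) * M ^ (2 * n))) hfu_cont.aestronglyMeasurable ?_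
    refine Eventually.of_forall fun x => ?_
    rw [Real.norm_eq_abs]
    exact Ff_abs_bound n hn1 hM (hsupu x) (hsupu' x)
  have hfφ_meas : Measurable (fun x => Ff n (a * Real.exp (-|x|))
      (-Real.sign x * (a * Real.exp (-|x|)))) := by
    unfold Ff
    refine Measurable.add (Measurable.add (hφcont.measurable.pow_const _) ?_) ?_
    · exact Finset.measurable_sum _ fun k _ =>
        ((measurable_const.mul (hφcont.measurable.pow_const _)).mul (hφdmeas.pow_const _))
    · exact (measurable_const.mul (hφdmeas.pow_const _)).div_const _
  have hfφ_int : Integrable (fun x => Ff n (a * Real.exp (-|x|))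
      (-Real.sign x * (a * Real.exp (-|x|)))) (volume : Measure ℝ) := by
    refine Integrable.mono' (hφ2int.const_mul
      (((n : ℝ) + 2) * 2 ^ (n + 1) * M ^ (2 * n) * 2)) hfφ_meas.aestronglyMeasurable ?_
    refine Eventually.of_forall fun x => ?_
    rw [Real.norm_eq_abs]
    have h := Ff_abs_bound n hn1 hM (hφb x) (hφdb x)
    have h2 := hφd_le x
    have hc : (0:ℝ) ≤ ((n : ℝ) + 2) * 2 ^ (n + 1) * M ^ (2 * n) := by positivity
    nlinarith
  -- pointwise bound on the difference
  have hprod_le : ∀ s t : ℝ, s * t ≤ t ^ 2 / (2 * ε) + ε * s ^ 2 / 2 := by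
    intro s t
    rw [div_add_div _ _ (by positivity) (by norm_num : (2:ℝ) ≠ 0), le_div_iff₀ (by positivity)]
    nlinarith [sq_nonneg (t - ε * s), sq_nonneg (ε * s)]
  have hpt : ∀ x, |Ff n (u x) (u' x) - Ff n (a * Real.exp (-|x|))
      (-Real.sign x * (a * Real.exp (-|x|)))| ≤
      K1 / (2 * ε) * ((u x - a * Real.exp (-|x|)) ^ 2 +
        (u' x - (-Real.sign x * (a * Real.exp (-|x|)))) ^ 2) +
      (K1 * ε * ((u x) ^ 2 + (u' x) ^ 2) +
       K1 * ε * ((a * Real.exp (-|x|)) ^ 2 + (-Real.sign x * (a * Real.exp (-|x|))) ^ 2)) := by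
    intro x
    have hd := Ff_diff_bound n hM (hsupu x) (hsupu' x) (hφb x) (hφdb x)
    refine hd.trans ?_
    set α := u x
    set β := u' x
    set γ := a * Real.exp (-|x|)
    set δ := -Real.sign x * (a * Real.exp (-|x|))
    have e1 : (|α| + |γ|) * |α - γ| ≤ (α - γ) ^ 2 / (2 * ε) + ε * (α ^ 2 + γ ^ 2) := by
      have h := hprod_le (|α| + |γ|) |α - γ|
      have h2 : |α - γ| ^ 2 = (α - γ) ^ 2 := sq_abs _
      have h3 : (|α| + |γ|) ^ 2 ≤ 2 * (α ^ 2 + γ ^ 2) := by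
        nlinarith [sq_abs α, sq_abs γ, sq_nonneg (|α| - |γ|)]
      rw [h2] at h
      nlinarith
    have e2 : (|β| + |δ|) * |β - δ| ≤ (β - δ) ^ 2 / (2 * ε) + ε * (β ^ 2 + δ ^ 2) := by
      have h := hprod_le (|β| + |δ|) |β - δ|
      have h2 : |β - δ| ^ 2 = (β - δ) ^ 2 := sq_abs _
      have h3 : (|β| + |δ|) ^ 2 ≤ 2 * (β ^ 2 + δ ^ 2) := by
        nlinarith [sq_abs β, sq_abs δ, sq_nonneg (|β| - |δ|)]
      rw [h2] at h
      nlinarith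
    have hsum : (|α| + |γ|) * |α - γ| + (|β| + |δ|) * |β - δ| ≤
        ((α - γ) ^ 2 + (β - δ) ^ 2) / (2 * ε) + ε * (α ^ 2 + β ^ 2) + ε * (γ ^ 2 + δ ^ 2) := by
      have e3 : ((α - γ) ^ 2 + (β - δ) ^ 2) / (2 * ε) =
          (α - γ) ^ 2 / (2 * ε) + (β - δ) ^ 2 / (2 * ε) := by ring
      linarith
    calc K1 * ((|α| + |γ|) * |α - γ| + (|β| + |δ|) * |β - δ|)
        ≤ K1 * (((α - γ) ^ 2 + (β - δ) ^ 2) / (2 * ε) + ε * (α ^ 2 + β ^ 2) +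
            ε * (γ ^ 2 + δ ^ 2)) := mul_le_mul_of_nonneg_left hsum hK1.le
      _ = K1 / (2 * ε) * ((α - γ) ^ 2 + (β - δ) ^ 2) +
          (K1 * ε * (α ^ 2 + β ^ 2) + K1 * ε * (γ ^ 2 + δ ^ 2)) := by ring
  -- integrability of the dominating pieces
  have hId1 : Integrable (fun x => (u x - a * Real.exp (-|x|)) ^ 2) (volume : Measure ℝ) :=
    (hu2.sub hφmem).integrable_sq
  have hId2 : Integrable (fun x =>
      (u' x - (-Real.sign x * (a * Real.exp (-|x|)))) ^ 2) (volume : Measure ℝ) :=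
    (hu'2.sub hφdmem).integrable_sq
  have hIg1 : Integrable (fun x => K1 / (2 * ε) * ((u x - a * Real.exp (-|x|)) ^ 2 +
      (u' x - (-Real.sign x * (a * Real.exp (-|x|)))) ^ 2)) (volume : Measure ℝ) :=
    (hId1.add hId2).const_mul _
  have hIg2 : Integrable (fun x => K1 * ε * ((u x) ^ 2 + (u' x) ^ 2)) (volume : Measure ℝ) :=
    (hIu.add hIu').const_mul _
  have hIg3 : Integrable (fun x => K1 * ε * ((a * Real.exp (-|x|)) ^ 2 +
      (-Real.sign x * (a * Real.exp (-|x|))) ^ 2)) (volume : Measure ℝ) :=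
    (hφ2int.add hφd2int).const_mul _
  -- assemble
  have key : |(∫ x : ℝ, Ff n (u x) (u' x)) -
      ∫ x : ℝ, Ff n (a * Real.exp (-|x|)) (-Real.sign x * (a * Real.exp (-|x|)))| ≤
      (K1 * (1 / 2 + R ^ 2 + 2 * Cφ) + 1) * ε := by
    rw [← integral_sub (f := fun x => Ff n (u x) (u' x))
      (g := fun x => Ff n (a * Real.exp (-|x|)) (-Real.sign x * (a * Real.exp (-|x|))))
      hfu_int hfφ_int]
    have habs_int : |∫ x : ℝ, (Ff n (u x) (u' x) - Ff n (a * Real.exp (-|x|))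
        (-Real.sign x * (a * Real.exp (-|x|))))| ≤
        ∫ x : ℝ, |Ff n (u x) (u' x) - Ff n (a * Real.exp (-|x|))
          (-Real.sign x * (a * Real.exp (-|x|)))| := by
      have := norm_integral_le_integral_norm (μ := (volume : Measure ℝ))
        (f := fun x => Ff n (u x) (u' x) - Ff n (a * Real.exp (-|x|))
          (-Real.sign x * (a * Real.exp (-|x|))))
      simpa [Real.norm_eq_abs] using this
    refine habs_int.trans ?_
    have hmono : (∫ x : ℝ, |Ff n (u x) (u' x) - Ff n (a * Real.exp (-|x|))
        (-Real.sign x * (a * Real.exp (-|x|)))|) ≤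
        ∫ x : ℝ, (K1 / (2 * ε) * ((u x - a * Real.exp (-|x|)) ^ 2 +
          (u' x - (-Real.sign x * (a * Real.exp (-|x|)))) ^ 2) +
        (K1 * ε * ((u x) ^ 2 + (u' x) ^ 2) +
         K1 * ε * ((a * Real.exp (-|x|)) ^ 2 + (-Real.sign x * (a * Real.exp (-|x|))) ^ 2))) := by
      refine integral_mono (hfu_int.sub hfφ_int).abs (hIg1.add (hIg2.add hIg3)) ?_
      intro x
      exact hpt x
    refine hmono.trans ?_
    rw [integral_add (f := fun x => K1 / (2 * ε) * ((u x - a * Real.exp (-|x|)) ^ 2 +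
        (u' x - (-Real.sign x * (a * Real.exp (-|x|)))) ^ 2))
        (g := fun x => K1 * ε * ((u x) ^ 2 + (u' x) ^ 2) +
          K1 * ε * ((a * Real.exp (-|x|)) ^ 2 + (-Real.sign x * (a * Real.exp (-|x|))) ^ 2))
        hIg1 (hIg2.add hIg3),
      integral_add (f := fun x => K1 * ε * ((u x) ^ 2 + (u' x) ^ 2))
        (g := fun x => K1 * ε * ((a * Real.exp (-|x|)) ^ 2 +
          (-Real.sign x * (a * Real.exp (-|x|))) ^ 2)) hIg2 hIg3,
      integral_const_mul, integral_const_mul, integral_const_mul,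
      integral_add (f := fun x => u x ^ 2) (g := fun x => u' x ^ 2) hIu hIu',
      integral_add (f := fun x => (a * Real.exp (-|x|)) ^ 2)
        (g := fun x => (-Real.sign x * (a * Real.exp (-|x|))) ^ 2) hφ2int hφd2int]
    have hb1 : K1 / (2 * ε) * (∫ x : ℝ, ((u x - a * Real.exp (-|x|)) ^ 2 +
        (u' x - (-Real.sign x * (a * Real.exp (-|x|)))) ^ 2)) ≤ K1 / (2 * ε) * ε ^ 2 :=
      mul_le_mul_of_nonneg_left hclose (by positivity)
    have he1 : K1 / (2 * ε) * ε ^ 2 = K1 * ε / 2 := by field_simp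
    have hb2 : (∫ x : ℝ, u x ^ 2) + (∫ x : ℝ, u' x ^ 2) ≤ R ^ 2 := by linarith [hsplit ▸ hH2]
    have hφd_int_le : (∫ x : ℝ, (-Real.sign x * (a * Real.exp (-|x|))) ^ 2) ≤ Cφ :=
      integral_mono hφd2int hφ2int fun x => hφd_le x
    have hKε : 0 ≤ K1 * ε := by positivity
    have hb3 : K1 * ε * ((∫ x : ℝ, u x ^ 2) + ∫ x : ℝ, u' x ^ 2) ≤ K1 * ε * R ^ 2 :=
      mul_le_mul_of_nonneg_left hb2 hKε
    have hb4 : K1 * ε * (Cφ + ∫ x : ℝ, (-Real.sign x * (a * Real.exp (-|x|))) ^ 2) ≤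
        K1 * ε * (2 * Cφ) := by
      refine mul_le_mul_of_nonneg_left ?_ hKε
      linarith
    have hint1 : (∫ x : ℝ, ((u x - a * Real.exp (-|x|)) ^ 2 +
        (u' x - (-Real.sign x * (a * Real.exp (-|x|)))) ^ 2)) = (∫ x : ℝ,
        ((u x - a * Real.exp (-|x|)) ^ 2 +
          (u' x - (-Real.sign x * (a * Real.exp (-|x|)))) ^ 2)) := rfl
    nlinarith [hb1, hb3, hb4, he1]
  exact key
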